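/- Let g(t) = (1/m)·Σ_{j=1}^m exp(i·a_j·t - b_j·t²/2) with a_j ∈ ℝ, b_j ≥ 0, (1/m)Σ_j(|a_j| + √b_j) ≤ A and (1/m)Σ_j b_j ≤ A². Let τ = min_j b_j. Then for all t > 0, |g'(t)| ≤ A·exp(-τt²/2) + min{A²·t·exp(-τt²/2), 2/(e·t)}. -/

import Mathlib

open Complex Real Finset

lemma aux_xexp (x : ℝ) : x * Real.exp (-x / 2) ≤ 2 / Real.exp 1 := by
  rcases le_or_gt x 0 with hx | hx
  · have h1 : x * Real.exp (-x / 2) ≤ 0 :=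
      mul_nonpos_of_nonpos_of_nonneg hx (Real.exp_nonneg _)
    have h2 : (0:ℝ) < 2 / Real.exp 1 := by positivity
    linarith
  · have h1 : x ≤ 2 * Real.exp (x / 2 - 1) := by
      have := Real.add_one_le_exp (x / 2 - 1)
      linarith
    calc x * Real.exp (-x / 2) ≤ 2 * Real.exp (x / 2 - 1) * Real.exp (-x / 2) :=
          mul_le_mul_of_nonneg_right h1 (Real.exp_nonneg _)
      _ = 2 * Real.exp (x / 2 - 1 + -x / 2) := by rw [mul_assoc, Real.exp_add]
      _ = 2 * Real.exp (-1) := by rw [show x / 2 - 1 + -x / 2 = (-1:ℝ) by ring]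
      _ = 2 / Real.exp 1 := by rw [Real.exp_neg]; ring

theorem stmt10 (m : ℕ) (hm : 0 < m) (A : ℝ) (hA : 0 < A)
    (a b : Fin m → ℝ) (hb : ∀ j, 0 ≤ b j)
    (havg : (1 / m : ℝ) * ∑ j, (|a j| + Real.sqrt (b j)) ≤ A)
    (havg2 : (1 / m : ℝ) * ∑ j, b j ≤ A ^ 2)
    (τ : ℝ) (hτle : ∀ j, τ ≤ b j) (hτmem : ∃ j, b j = τ)
    (g : ℝ → ℂ)
    (hg : ∀ t : ℝ, g t = (1 / m : ℝ) *
      ∑ j, Complex.exp (Complex.I * (a j) * t - (b j) * t ^ 2 / 2)) :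
    ∀ t : ℝ, 0 < t →
      ‖deriv g t‖ ≤
        A * Real.exp (-τ * t ^ 2 / 2) +
          min (A ^ 2 * t * Real.exp (-τ * t ^ 2 / 2)) (2 / (Real.exp 1 * t)) := by
  intro t ht
  have hgfun : g = fun t : ℝ => ((1 / m : ℝ) : ℂ) *
      ∑ j, Complex.exp (Complex.I * (a j) * t - (b j) * t ^ 2 / 2) := funext hg
  subst hgfun
  -- derivative
  have hder : HasDerivAt (fun t : ℝ => ((1 / m : ℝ) : ℂ) *
      ∑ j, Complex.exp (Complex.I * (a j) * t - (b j) * t ^ 2 / 2))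
      (((1 / m : ℝ) : ℂ) * ∑ j, (Complex.I * (a j) - (b j) * t) *
        Complex.exp (Complex.I * (a j) * t - (b j) * t ^ 2 / 2)) t := by
    apply HasDerivAt.const_mul
    apply HasDerivAt.fun_sum
    intro j _
    have hid : HasDerivAt (fun t : ℝ => (t : ℂ)) 1 t := by
      simpa using (hasDerivAt_id t).ofReal_comp
    have h1 : HasDerivAt (fun t : ℝ => Complex.I * (a j) * (t : ℂ))
        (Complex.I * (a j) * 1) t := hid.const_mul _
    have h2 := ((hid.mul hid).const_mul ((b j : ℂ))).div_const 2
    have h2' : HasDerivAt (fun t : ℝ => ((b j : ℂ) * (t : ℂ) ^ 2) / 2)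
        ((b j : ℂ) * (1 * (t : ℂ) + (t : ℂ) * 1) / 2) t := by
      simpa [pow_two] using h2
    have h3 := (h1.fun_sub h2').cexp
    refine h3.congr_deriv ?_
    push_cast
    ring
  rw [hder.deriv]
  -- pointwise bound
  have hm' : (0:ℝ) < (m:ℝ) := Nat.cast_pos.mpr hm
  have habs : ‖((1 / m : ℝ) : ℂ) * ∑ j, (Complex.I * (a j) - (b j) * t) *
        Complex.exp (Complex.I * (a j) * t - (b j) * t ^ 2 / 2)‖ ≤
      (1 / m : ℝ) * ∑ j, (|a j| + b j * t) * Real.exp (-(b j) * t ^ 2 / 2) := by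
    rw [norm_mul, Complex.norm_real,
      Real.norm_of_nonneg (by positivity)]
    apply mul_le_mul_of_nonneg_left _ (by positivity)
    refine le_trans (norm_sum_le _ _) (Finset.sum_le_sum fun j _ => ?_)
    rw [norm_mul]
    have hexp : ‖Complex.exp (Complex.I * (a j) * t - (b j) * t ^ 2 / 2)‖ =
        Real.exp (-(b j) * t ^ 2 / 2) := by
      rw [Complex.norm_exp]
      congr 1
      simp [Complex.sub_re, Complex.div_re, Complex.mul_re, pow_two]
      ring
    rw [hexp]
    apply mul_le_mul_of_nonneg_right _ (Real.exp_nonneg _)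
    calc ‖Complex.I * (a j) - ((b j : ℂ) * t)‖
        ≤ ‖Complex.I * ((a j : ℝ) : ℂ)‖ + ‖((b j : ℂ) * t)‖ := norm_sub_le _ _
      _ = |a j| + b j * t := by
          rw [norm_mul, norm_mul, Complex.norm_I, one_mul, Complex.norm_real,
            Complex.norm_real, Complex.norm_real, Real.norm_eq_abs, Real.norm_eq_abs,
            Real.norm_eq_abs, _root_.abs_of_nonneg (hb j), _root_.abs_of_nonneg ht.le]
  refine le_trans habs ?_
  -- split the sum
  have hsplit : (1 / m : ℝ) * ∑ j, (|a j| + b j * t) * Real.exp (-(b j) * t ^ 2 / 2)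
      = (1 / m : ℝ) * ∑ j, |a j| * Real.exp (-(b j) * t ^ 2 / 2)
        + (1 / m : ℝ) * ∑ j, (b j * t) * Real.exp (-(b j) * t ^ 2 / 2) := by
    rw [← mul_add, ← Finset.sum_add_distrib]
    congr 1
    apply Finset.sum_congr rfl
    intro j _
    ring
  rw [hsplit]
  have hexp_mono : ∀ j : Fin m, Real.exp (-(b j) * t ^ 2 / 2) ≤ Real.exp (-τ * t ^ 2 / 2) := by
    intro j
    apply Real.exp_le_exp.mpr
    have ht2 : (0:ℝ) ≤ t ^ 2 := sq_nonneg t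
    nlinarith [hτle j]
  apply add_le_add
  · -- first sum
    have h1 : (1 / m : ℝ) * ∑ j, |a j| * Real.exp (-(b j) * t ^ 2 / 2) ≤
        (1 / m : ℝ) * ∑ j, |a j| * Real.exp (-τ * t ^ 2 / 2) := by
      apply mul_le_mul_of_nonneg_left _ (by positivity)
      exact Finset.sum_le_sum fun j _ =>
        mul_le_mul_of_nonneg_left (hexp_mono j) (abs_nonneg _)
    refine le_trans h1 ?_
    rw [← Finset.sum_mul, ← mul_assoc]
    apply mul_le_mul_of_nonneg_right _ (Real.exp_nonneg _)
    have h2 : (1 / m : ℝ) * ∑ j, |a j| ≤ (1 / m : ℝ) * ∑ j, (|a j| + Real.sqrt (b j)) := by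
      apply mul_le_mul_of_nonneg_left _ (by positivity)
      exact Finset.sum_le_sum fun j _ => by
        have := Real.sqrt_nonneg (b j); linarith
    linarith
  · -- second sum
    apply le_min
    · have h1 : (1 / m : ℝ) * ∑ j, (b j * t) * Real.exp (-(b j) * t ^ 2 / 2) ≤
          (1 / m : ℝ) * ∑ j, (b j * t) * Real.exp (-τ * t ^ 2 / 2) := by
        apply mul_le_mul_of_nonneg_left _ (by positivity)
        exact Finset.sum_le_sum fun j _ =>
          mul_le_mul_of_nonneg_left (hexp_mono j) (mul_nonneg (hb j) ht.le)
      refine le_trans h1 ?_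
      have : (1 / m : ℝ) * ∑ j, (b j * t) * Real.exp (-τ * t ^ 2 / 2)
          = ((1 / m : ℝ) * ∑ j, b j) * t * Real.exp (-τ * t ^ 2 / 2) := by
        rw [← Finset.sum_mul, ← Finset.sum_mul]
        ring
      rw [this]
      apply mul_le_mul_of_nonneg_right _ (Real.exp_nonneg _)
      exact mul_le_mul_of_nonneg_right havg2 ht.le
    · have hterm : ∀ j : Fin m, (b j * t) * Real.exp (-(b j) * t ^ 2 / 2) ≤
          2 / (Real.exp 1 * t) := by
        intro j
        have key := aux_xexp (b j * t ^ 2)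
        have h1 : (b j * t) * Real.exp (-(b j) * t ^ 2 / 2)
            = (b j * t ^ 2) * Real.exp (-(b j * t ^ 2) / 2) / t := by
          field_simp
        rw [h1]
        rw [div_le_div_iff₀ ht (by positivity)]
        have he : (0:ℝ) < Real.exp 1 := Real.exp_pos 1
        calc (b j * t ^ 2) * Real.exp (-(b j * t ^ 2) / 2) * (Real.exp 1 * t)
            ≤ (2 / Real.exp 1) * (Real.exp 1 * t) :=
              mul_le_mul_of_nonneg_right key (by positivity)
          _ = 2 * t := by field_simp
      calc (1 / m : ℝ) * ∑ j, (b j * t) * Real.exp (-(b j) * t ^ 2 / 2)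
          ≤ (1 / m : ℝ) * ∑ _j : Fin m, (2 / (Real.exp 1 * t)) := by
            apply mul_le_mul_of_nonneg_left _ (by positivity)
            exact Finset.sum_le_sum fun j _ => hterm j
        _ = 2 / (Real.exp 1 * t) := by
            rw [Finset.sum_const, Finset.card_univ, Fintype.card_fin, nsmul_eq_mul]
            field_simp
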